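/- Let A > 0, Θ ∈ [0, 1), M₀ > 0, and let P, Q be real numbers with |Q| ≤ Θ·A and |P| ≤ M₀·A. Set K = 2·M₀/(1 - Θ). Then for every (u, v) ∈ ℝ² with u ≠ 0 and |v| ≤ K·|u|, the image (u', v') = (A·u, P·u + Q·v) under the lower-triangular matrix with rows (A, 0), (P, Q) satisfies u' ≠ 0 and |v'| < K·|u'|. (Hence the cone {(u, v) : |v| ≤ K·|u|} is mapped strictly into its interior.) -/
import Mathlib


/-- Cone invariance for lower-triangular matrices: if `|Q| ≤ Θ·A`, `|P| ≤ M₀·A` with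
`Θ ∈ [0,1)`, `A, M₀ > 0`, and `K = 2M₀/(1-Θ)`, then the map `(u,v) ↦ (A·u, P·u + Q·v)`
maps the cone `{|v| ≤ K·|u|}` strictly into its interior. -/
theorem cone_invariance (A Θ M₀ P Q : ℝ) (hA : 0 < A) (hΘ : Θ ∈ Set.Ico (0 : ℝ) 1)
    (hM₀ : 0 < M₀) (hQ : |Q| ≤ Θ * A) (hP : |P| ≤ M₀ * A) :
    ∀ u v : ℝ, u ≠ 0 → |v| ≤ (2 * M₀ / (1 - Θ)) * |u| →
      A * u ≠ 0 ∧ |P * u + Q * v| < (2 * M₀ / (1 - Θ)) * |A * u| := by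
  obtain ⟨hΘ0, hΘ1⟩ := hΘ
  have h1Θ : 0 < 1 - Θ := by linarith
  set K := 2 * M₀ / (1 - Θ) with hK
  have hKpos : 0 < K := by positivity
  have hKΘ : K * (1 - Θ) = 2 * M₀ := div_mul_cancel₀ _ h1Θ.ne'
  intro u v hu hv
  have hu0 : 0 < |u| := abs_pos.mpr hu
  refine ⟨mul_ne_zero hA.ne' hu, ?_⟩
  have h1 : |P * u + Q * v| ≤ |P| * |u| + |Q| * |v| := by
    calc |P * u + Q * v| ≤ |P * u| + |Q * v| := abs_add_le _ _
    _ = |P| * |u| + |Q| * |v| := by rw [abs_mul, abs_mul]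
  have h2 : |Q| * |v| ≤ Θ * A * (K * |u|) := by
    apply mul_le_mul hQ hv (abs_nonneg _) (by positivity)
  have h3 : |P| * |u| ≤ M₀ * A * |u| := by
    exact mul_le_mul_of_nonneg_right hP (abs_nonneg _)
  have hAu : |A * u| = A * |u| := by rw [abs_mul, abs_of_pos hA]
  rw [hAu]
  have key : M₀ * A * |u| + Θ * A * (K * |u|) < K * (A * |u|) := by
    have : K * (A * |u|) - (M₀ * A * |u| + Θ * A * (K * |u|))
        = (K * (1 - Θ) - M₀) * (A * |u|) := by ring
    nlinarith [mul_pos hA hu0]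
  linarith
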